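/- Let p ≥ 1 be a real number. The Lebesgue area (two-dimensional volume) of the region {(x, y) ∈ ℝ² : |x|^p + |y|^p ≤ 1} enclosed by the unit p-circle equals π_p := 2 ∫_0^1 (1 - t^p)^(-(p-1)/p) dt. -/

import Mathlib

open Real intervalIntegral MeasureTheory Set

lemma pc_cont (p : ℝ) (hp : 1 ≤ p) :
    Continuous (fun t : ℝ => (1 - |t| ^ p) ^ (1 / p)) := by
  have hp0 : (0:ℝ) < p := lt_of_lt_of_le one_pos hp
  exact (continuous_const.sub (continuous_abs.rpow_const fun x => Or.inr hp0.le)).rpow_const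
    fun x => Or.inr (by positivity)

lemma pc_integrable (p : ℝ) (hp : 1 ≤ p) :
    IntervalIntegrable (fun t : ℝ => (1 - t ^ p) ^ (-(p - 1) / p)) volume 0 1 := by
  have hp0 : (0:ℝ) < p := lt_of_lt_of_le one_pos hp
  set a : ℝ := (p - 1) / p with ha
  have ha0 : 0 ≤ a := div_nonneg (by linarith) hp0.le
  have ha1 : a < 1 := by rw [ha, div_lt_one hp0]; linarith
  have hdom : IntervalIntegrable (fun t : ℝ => (1 - t) ^ (-a)) volume 0 1 := by
    have := ((intervalIntegrable_rpow' (a := 0) (b := 1) (r := -a) (by linarith)).comp_sub_left 1).symm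
    simpa using this
  refine hdom.mono_fun ?_ ?_
  · exact (by fun_prop :
      Measurable (fun t : ℝ => (1 - t ^ p) ^ (-(p - 1) / p))).aestronglyMeasurable
  · rw [uIoc_of_le (by norm_num : (0:ℝ) ≤ 1)]
    refine ae_restrict_of_forall_mem measurableSet_Ioc fun t ht => ?_
    have ht0 : 0 < t := ht.1
    have ht1 : t ≤ 1 := ht.2
    have htp : t ^ p ≤ t := by
      nth_rewrite 2 [← Real.rpow_one t]
      exact Real.rpow_le_rpow_of_exponent_ge ht0 ht1 hp
    have h1 : (0:ℝ) ≤ 1 - t ^ p := by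
      have : t ^ p ≤ 1 := Real.rpow_le_one ht0.le ht1 hp0.le
      linarith
    have hna : -(p-1)/p = -a := by rw [ha, neg_div]
    simp only []
    rw [hna, Real.norm_of_nonneg (Real.rpow_nonneg h1 _),
      Real.norm_of_nonneg (Real.rpow_nonneg (by linarith) _)]
    rcases eq_or_lt_of_le ht1 with rfl | ht1'
    · simp [Real.one_rpow]
    · exact Real.rpow_le_rpow_of_nonpos (by linarith) (by linarith) (by linarith)

lemma pc_key (p : ℝ) (hp : 1 ≤ p) :
    ∫ t in (0:ℝ)..1, (1 - t ^ p) ^ (-(p - 1) / p)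
      = 2 * ∫ t in (0:ℝ)..1, (1 - t ^ p) ^ (1 / p) := by
  have hp0 : (0:ℝ) < p := lt_of_lt_of_le one_pos hp
  set g : ℝ → ℝ := fun t => (1 - t ^ p) ^ (1 / p) with hg
  set h : ℝ → ℝ := fun t => (1 - t ^ p) ^ (-(p - 1) / p) with hh
  have hgc : ContinuousOn g (Icc 0 1) := by
    have := pc_cont p hp
    refine (this.continuousOn (s := Icc 0 1)).congr fun t ht => ?_
    simp [hg, abs_of_nonneg ht.1]
  have hgint : IntervalIntegrable g volume 0 1 := by
    rw [intervalIntegrable_iff_integrableOn_Icc_of_le (by norm_num)]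
    exact hgc.integrableOn_compact isCompact_Icc
  have hhint := pc_integrable p hp
  have hF : ∀ t ∈ Ioo (0:ℝ) 1,
      HasDerivAt (fun t => t * (1 - t ^ p) ^ (1 / p)) (2 * g t - h t) t := by
    intro t ht
    have ht0 : 0 < t := ht.1
    have ht1 : t < 1 := ht.2
    have hu : 0 < 1 - t ^ p := by
      have : t ^ p < 1 := Real.rpow_lt_one ht0.le ht1 hp0
      linarith
    have d1 : HasDerivAt (fun t : ℝ => t ^ p) (p * t ^ (p - 1)) t :=
      Real.hasDerivAt_rpow_const (Or.inl ht0.ne')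
    have d2 : HasDerivAt (fun t : ℝ => 1 - t ^ p) (-(p * t ^ (p - 1))) t := d1.const_sub 1
    have d3 := d2.rpow_const (p := 1 / p) (Or.inl hu.ne')
    have d4 := (hasDerivAt_id t).mul d3
    convert d4 using 1
    · rfl
    · rfl
    · rfl
    have e1 : t * t ^ (p - 1) = t ^ p := by
      nth_rewrite 1 [← Real.rpow_one t]
      rw [← Real.rpow_add ht0]; ring_nf
    have e2 : (1 - t ^ p) * (1 - t ^ p) ^ (1 / p - 1) = (1 - t ^ p) ^ (1 / p) := by
      nth_rewrite 1 [← Real.rpow_one (1 - t ^ p)]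
      rw [← Real.rpow_add hu]; ring_nf
    have e4 : -(p - 1) / p = 1 / p - 1 := by field_simp; ring
    have e3 : p * (1 / p) = 1 := mul_one_div_cancel hp0.ne'
    simp only [hg, hh, e4, id_eq]
    linear_combination (-1 : ℝ) * e2 + (1 - t ^ p) ^ (1 / p - 1) * e1
      + t * t ^ (p - 1) * (1 - t ^ p) ^ (1 / p - 1) * e3
  have hcont : ContinuousOn (fun t : ℝ => t * (1 - t ^ p) ^ (1 / p)) (Icc 0 1) := by
    refine continuousOn_id.mul ?_
    exact hgc
  have hder : ∀ t ∈ Ioo (0:ℝ) 1,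
      HasDerivWithinAt (fun t => t * (1 - t ^ p) ^ (1 / p)) (2 * g t - h t) (Ioi t) t :=
    fun t ht => (hF t ht).hasDerivWithinAt
  have hint : IntervalIntegrable (fun t => 2 * g t - h t) volume 0 1 :=
    ((hgint.const_mul 2).sub hhint)
  have := intervalIntegral.integral_eq_sub_of_hasDeriv_right_of_le (by norm_num : (0:ℝ) ≤ 1)
    hcont hder hint
  rw [intervalIntegral.integral_sub (hgint.const_mul 2) hhint,
    intervalIntegral.integral_const_mul] at this
  simp only [Real.one_rpow, sub_self, Real.zero_rpow (by positivity : 1/p ≠ 0),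
    mul_zero, zero_mul, one_mul, mul_one] at this
  linarith [this]

/-- The area enclosed by the unit p-circle `|x|^p + |y|^p ≤ 1` equals
`π_p = 2 ∫_0^1 (1-t^p)^(-(p-1)/p) dt`. -/
theorem area_pcircle (p : ℝ) (hp : 1 ≤ p) :
    volume {q : ℝ × ℝ | |q.1| ^ p + |q.2| ^ p ≤ 1}
      = ENNReal.ofReal (2 * ∫ t in (0 : ℝ)..1, (1 - t ^ p) ^ (-(p - 1) / p)) := by
  have hp0 : (0:ℝ) < p := lt_of_lt_of_le one_pos hp
  set f : ℝ → ℝ := fun x => 2 * (1 - |x| ^ p) ^ (1 / p) with hf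
  have hfc : Continuous f := continuous_const.mul (pc_cont p hp)
  have hS : MeasurableSet {q : ℝ × ℝ | |q.1| ^ p + |q.2| ^ p ≤ 1} := by
    have : Continuous fun q : ℝ × ℝ => |q.1| ^ p + |q.2| ^ p :=
      ((continuous_abs.comp continuous_fst).rpow_const fun _ => Or.inr hp0.le).add
        ((continuous_abs.comp continuous_snd).rpow_const fun _ => Or.inr hp0.le)
    exact (isClosed_le this continuous_const).measurableSet
  rw [MeasureTheory.Measure.volume_eq_prod, MeasureTheory.Measure.prod_apply hS]
  have hslice : ∀ x : ℝ, volume (Prod.mk x ⁻¹' {q : ℝ × ℝ | |q.1| ^ p + |q.2| ^ p ≤ 1})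
      = Set.indicator (Set.Icc (-1:ℝ) 1) (fun x => ENNReal.ofReal (f x)) x := by
    intro x
    by_cases hx : x ∈ Set.Icc (-1:ℝ) 1
    · have hx1 : |x| ≤ 1 := abs_le.mpr ⟨hx.1, hx.2⟩
      have hxp : |x| ^ p ≤ 1 := Real.rpow_le_one (abs_nonneg x) hx1 hp0.le
      set c : ℝ := (1 - |x| ^ p) ^ (1 / p) with hc
      have hc0 : 0 ≤ c := Real.rpow_nonneg (by linarith) _
      have hcp : c ^ p = 1 - |x| ^ p := by
        rw [hc, ← Real.rpow_mul (by linarith), one_div_mul_cancel hp0.ne', Real.rpow_one]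
      have hset : Prod.mk x ⁻¹' {q : ℝ × ℝ | |q.1| ^ p + |q.2| ^ p ≤ 1}
          = Set.Icc (-c) c := by
        ext y
        simp only [Set.mem_preimage, Set.mem_setOf_eq, Set.mem_Icc, ← abs_le]
        rw [← Real.rpow_le_rpow_iff (abs_nonneg y) hc0 hp0, hcp]
        constructor <;> intro h <;> linarith
      rw [hset, Real.volume_Icc, Set.indicator_of_mem hx]
      congr 1
      rw [hf]; ring
    · have hx1 : 1 < |x| := by
        rcases lt_or_ge 1 |x| with h | h
        · exact h
        · exact absurd (abs_le.mp h) (by simpa [Set.mem_Icc] using hx)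
      have hset : Prod.mk x ⁻¹' {q : ℝ × ℝ | |q.1| ^ p + |q.2| ^ p ≤ 1} = ∅ := by
        ext y
        simp only [Set.mem_preimage, Set.mem_setOf_eq, Set.mem_empty_iff_false, iff_false, not_le]
        have h1 : 1 < |x| ^ p := Real.one_lt_rpow_iff_of_pos (by linarith) |>.mpr (Or.inl ⟨hx1, hp0⟩)
        have h2 : 0 ≤ |y| ^ p := Real.rpow_nonneg (abs_nonneg y) _
        linarith
      rw [hset, Set.indicator_of_notMem hx]
      simp
  simp_rw [hslice]
  rw [MeasureTheory.lintegral_indicator measurableSet_Icc]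
  have hint : IntegrableOn f (Set.Icc (-1:ℝ) 1) volume :=
    hfc.continuousOn.integrableOn_Icc
  have hnn : 0 ≤ᵐ[volume.restrict (Set.Icc (-1:ℝ) 1)] f := by
    filter_upwards [MeasureTheory.ae_restrict_mem measurableSet_Icc] with x hx
    simp only [Pi.zero_apply]
    have : (0:ℝ) ≤ (1 - |x| ^ p) ^ (1 / p) := Real.rpow_nonneg ?_ _
    · rw [hf]; linarith
    · have : |x| ^ p ≤ 1 := Real.rpow_le_one (abs_nonneg x) (abs_le.mpr ⟨hx.1, hx.2⟩) hp0.le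
      linarith
  rw [← MeasureTheory.ofReal_integral_eq_lintegral_ofReal hint hnn]
  congr 1
  have h1 : ∫ x in Set.Icc (-1:ℝ) 1, f x = ∫ x in (-1:ℝ)..1, f x := by
    rw [intervalIntegral.integral_of_le (by norm_num : (-1:ℝ) ≤ 1),
      MeasureTheory.integral_Icc_eq_integral_Ioc]
  have hii : ∀ a b : ℝ, IntervalIntegrable f volume a b := fun a b =>
    hfc.intervalIntegrable a b
  have h2 : ∫ x in (-1:ℝ)..1, f x = 2 * ∫ x in (0:ℝ)..1, f x := by
    rw [← intervalIntegral.integral_add_adjacent_intervals (hii (-1) 0) (hii 0 1)]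
    have : ∫ x in (-1:ℝ)..0, f x = ∫ x in (0:ℝ)..1, f x := by
      have : ∫ x in (-1:ℝ)..0, f x = ∫ x in (-1:ℝ)..0, f (-x) := by
        refine intervalIntegral.integral_congr fun x _ => ?_
        simp [hf, abs_neg]
      rw [this, intervalIntegral.integral_comp_neg]
      norm_num
    rw [this]; ring
  have h3 : ∫ x in (0:ℝ)..1, f x = 2 * ∫ x in (0:ℝ)..1, (1 - x ^ p) ^ (1 / p) := by
    rw [hf, intervalIntegral.integral_const_mul]
    congr 1
    refine intervalIntegral.integral_congr fun x hx => ?_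
    rw [Set.uIcc_of_le (by norm_num : (0:ℝ) ≤ 1)] at hx
    rw [abs_of_nonneg hx.1]
  rw [h1, h2, h3, pc_key p hp]
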